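/- Let A_δ (δ > 1) be the simple perturbed PCM with Perron eigenvector w, and suppose w' is a positive vector with w'_j = w_j for all j ≥ 3 that approximates A_δ at least as well as w entrywise (|a_{ij} − w'_i/w'_j| ≤ |a_{ij} − w_i/w_j| for all i,j). Then w'_1 ≤ w_1 and w'_2 ≥ w_2, and if (w'_1, w'_2) ≠ (w_1, w_2) then w'_1/w'_2 < w_1/w_2 < a_{12}, so w' approximates a_{12} strictly worse than w does. -/

import Mathlib

/-- A pairwise comparison matrix: positive entries with the reciprocal property. -/
def IsPCM {n : ℕ} (A : Matrix (Fin n) (Fin n) ℝ) : Prop :=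
  (∀ i j, 0 < A i j) ∧ (∀ i j, A j i = 1 / A i j)

/-- A PCM is consistent if `a i k * a k j = a i j` for all `i j k`. -/
def IsConsistent {n : ℕ} (A : Matrix (Fin n) (Fin n) ℝ) : Prop :=
  ∀ i j k, A i k * A k j = A i j

/-- `lam` together with a positive eigenvector `w` forms the Perron eigenpair of `A`
(for a positive matrix, the eigenvalue admitting a positive eigenvector is exactly
the Perron (maximal) eigenvalue). -/
def IsPerronEigenpair {n : ℕ} (A : Matrix (Fin n) (Fin n) ℝ) (lam : ℝ)
    (w : Fin n → ℝ) : Prop :=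
  (∀ i, 0 < w i) ∧ A.mulVec w = lam • w

/-- The simple perturbed PCM `A_δ`: the consistent PCM generated by positive weights
`x` (with `x 0 = 1`), whose entry in position (1,2) (0-based: (0,1)) is multiplied
by `δ` and its reciprocal by `1/δ`. -/
noncomputable def simplePerturbed {n : ℕ} (x : Fin n → ℝ) (δ : ℝ) : Matrix (Fin n) (Fin n) ℝ :=
  fun i j =>
    if i.val = 0 ∧ j.val = 1 then x j * δ
    else if i.val = 1 ∧ j.val = 0 then 1 / (x i * δ)
    else x j / x i

/-- A positive weight vector `w` is efficient for `A` if no positive vector `w'`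
approximates every entry at least as well, and some entry strictly better. -/
def IsEfficient {n : ℕ} (A : Matrix (Fin n) (Fin n) ℝ) (w : Fin n → ℝ) : Prop :=
  ¬ ∃ w' : Fin n → ℝ, (∀ i, 0 < w' i) ∧
      (∀ i j, |A i j - w' i / w' j| ≤ |A i j - w i / w j|) ∧
      (∃ k l, |A k l - w' k / w' l| < |A k l - w k / w l|)

set_option maxHeartbeats 1000000 in
/-- if w' agrees with the Perron eigenvector w on coordinates ≥ 3
and approximates A_δ (δ > 1) at least as well entrywise, then w'₁ ≤ w₁ and
w'₂ ≥ w₂; if (w'₁, w'₂) ≠ (w₁, w₂) then w'₁/w'₂ < w₁/w₂ < a₁₂, so w'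
approximates a₁₂ strictly worse than w does. -/
theorem dominating_vector_forces_worse_a12 {n : ℕ} (hn : 3 ≤ n)
    (x : Fin n → ℝ) (hx : ∀ i, 0 < x i) (hx0 : ∀ i : Fin n, i.val = 0 → x i = 1)
    (δ : ℝ) (hδ : 1 < δ)
    (lam : ℝ) (w : Fin n → ℝ)
    (hPerron : IsPerronEigenpair (simplePerturbed x δ) lam w)
    (w' : Fin n → ℝ) (hw'pos : ∀ i, 0 < w' i)
    (hagree : ∀ j : Fin n, 2 ≤ j.val → w' j = w j)
    (happrox : ∀ i j, |simplePerturbed x δ i j - w' i / w' j| ≤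
      |simplePerturbed x δ i j - w i / w j|) :
    w' ⟨0, by omega⟩ ≤ w ⟨0, by omega⟩ ∧
    w ⟨1, by omega⟩ ≤ w' ⟨1, by omega⟩ ∧
    ((w' ⟨0, by omega⟩ ≠ w ⟨0, by omega⟩ ∨ w' ⟨1, by omega⟩ ≠ w ⟨1, by omega⟩) →
      w' ⟨0, by omega⟩ / w' ⟨1, by omega⟩ < w ⟨0, by omega⟩ / w ⟨1, by omega⟩ ∧
      w ⟨0, by omega⟩ / w ⟨1, by omega⟩ <
        simplePerturbed x δ ⟨0, by omega⟩ ⟨1, by omega⟩ ∧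
      |simplePerturbed x δ ⟨0, by omega⟩ ⟨1, by omega⟩ -
          w ⟨0, by omega⟩ / w ⟨1, by omega⟩| <
        |simplePerturbed x δ ⟨0, by omega⟩ ⟨1, by omega⟩ -
          w' ⟨0, by omega⟩ / w' ⟨1, by omega⟩|) := by

  obtain ⟨hwpos, heig⟩ := hPerron
  set A : Matrix (Fin n) (Fin n) ℝ := simplePerturbed x δ with hA
  set i0 : Fin n := ⟨0, by omega⟩ with hi0
  set i1 : Fin n := ⟨1, by omega⟩ with hi1
  set i2 : Fin n := ⟨2, by omega⟩ with hi2
  have hne01 : i0 ≠ i1 := by simp [hi0, hi1, Fin.ext_iff]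
  have hne02 : i0 ≠ i2 := by simp [hi0, hi2, Fin.ext_iff]
  have hne12 : i1 ≠ i2 := by simp [hi1, hi2, Fin.ext_iff]
  have hx00 : x i0 = 1 := hx0 i0 rfl
  -- entry formulas
  have hA0 : ∀ j : Fin n, j.val ≠ 1 → A i0 j = x j := by
    intro j hj
    simp [hA, simplePerturbed, hi0, hj, hx00, hx0 ⟨0, by omega⟩ rfl]
  have hA01 : A i0 i1 = x i1 * δ := by
    simp [hA, simplePerturbed, hi0, hi1]
  have hA1 : ∀ j : Fin n, j.val ≠ 0 → A i1 j = x j / x i1 := by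
    intro j hj
    simp [hA, simplePerturbed, hi1, hj]
  have hA10 : A i1 i0 = 1 / (x i1 * δ) := by
    simp [hA, simplePerturbed, hi1, hi0]
  have hA2 : ∀ j : Fin n, A i2 j = x j / x i2 := by
    intro j
    simp [hA, simplePerturbed, hi2]
  -- eigen equations
  have heq : ∀ i : Fin n, ∑ j, A i j * w j = lam * w i := by
    intro i
    have := congrFun heig i
    simpa [Matrix.mulVec, dotProduct] using this
  set S : ℝ := ∑ j, x j * w j with hS
  have hSpos : 0 < S := by
    apply Finset.sum_pos
    · intro j _; exact mul_pos (hx j) (hwpos j)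
    · exact ⟨i0, Finset.mem_univ i0⟩
  have hδ0 : (0:ℝ) < δ := by linarith
  -- row 0
  have E0 : lam * w i0 = S + (δ - 1) * (x i1 * w i1) := by
    have key : ∑ j, (A i0 j * w j - x j * w j) = (δ - 1) * (x i1 * w i1) := by
      rw [Finset.sum_eq_single i1]
      · rw [hA01]; ring
      · intro j _ hj
        have hjv : j.val ≠ 1 := fun h => hj (Fin.ext (by simp [h, hi1]))
        rw [hA0 j hjv]; ring
      · intro h; exact absurd (Finset.mem_univ i1) h
    have := heq i0
    rw [Finset.sum_sub_distrib] at key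
    rw [this] at key
    rw [hS]; linarith
  -- row 1
  have E1 : lam * (x i1 * w i1) = S - (1 - 1/δ) * w i0 := by
    have key : ∑ j, (x i1 * (A i1 j * w j) - x j * w j) = -((1 - 1/δ) * w i0) := by
      rw [Finset.sum_eq_single i0]
      · rw [hA10, hx00]
        have : x i1 ≠ 0 := ne_of_gt (hx i1)
        field_simp
        ring
      · intro j _ hj
        have hjv : j.val ≠ 0 := fun h => hj (Fin.ext (by simp [h, hi0]))
        rw [hA1 j hjv]
        have : x i1 ≠ 0 := ne_of_gt (hx i1)
        field_simp
        ring
      · intro h; exact absurd (Finset.mem_univ i0) h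
    have h1 := heq i1
    rw [Finset.sum_sub_distrib, ← Finset.mul_sum, h1] at key
    rw [hS]; linarith
  -- row 2
  have E2 : lam * (x i2 * w i2) = S := by
    have key : ∑ j, (x i2 * (A i2 j * w j)) = S := by
      rw [hS]
      apply Finset.sum_congr rfl
      intro j _
      rw [hA2 j]
      have : x i2 ≠ 0 := ne_of_gt (hx i2)
      field_simp
    have h2 := heq i2
    rw [← Finset.mul_sum, h2] at key
    linarith
  have hlam : 0 < lam := by
    have hpos : 0 < x i2 * w i2 := mul_pos (hx i2) (hwpos i2)
    nlinarith
  have hδinv : 1 - 1/δ > 0 := by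
    have : 1/δ < 1 := by rw [div_lt_one hδ0]; exact hδ
    linarith
  have hx1w1 : 0 < x i1 * w i1 := mul_pos (hx i1) (hwpos i1)
  have hx2w2 : 0 < x i2 * w i2 := mul_pos (hx i2) (hwpos i2)
  -- F1 : x2 w2 < w0
  have F1 : x i2 * w i2 < w i0 := by
    have : lam * (x i2 * w i2) < lam * w i0 := by
      rw [E0, E2]; nlinarith
    exact lt_of_mul_lt_mul_left this (le_of_lt hlam)
  -- F2 : x1 w1 < x2 w2
  have F2 : x i1 * w i1 < x i2 * w i2 := by
    have : lam * (x i1 * w i1) < lam * (x i2 * w i2) := by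
      rw [E1, E2]; nlinarith [hwpos i0]
    exact lt_of_mul_lt_mul_left this (le_of_lt hlam)
  -- S lower bound
  have hS3 : x i0 * w i0 + x i1 * w i1 + x i2 * w i2 ≤ S := by
    have hsub : ({i0, i1, i2} : Finset (Fin n)) ⊆ Finset.univ := Finset.subset_univ _
    have hle := Finset.sum_le_sum_of_subset_of_nonneg hsub
      (fun j _ _ => le_of_lt (mul_pos (hx j) (hwpos j)))
    rw [Finset.sum_insert (by simp [hne01, hne02]),
        Finset.sum_insert (by simp [hne12]), Finset.sum_singleton] at hle
    rw [hS]; linarith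
  -- F3 : w0 < δ * (x1 w1)
  have F3 : w i0 < δ * (x i1 * w i1) := by
    have key : lam * (δ * (x i1 * w i1)) - lam * w i0 = (δ - 1) * (S - w i0 - x i1 * w i1) := by
      rw [E0]
      have : lam * (δ * (x i1 * w i1)) = δ * (lam * (x i1 * w i1)) := by ring
      rw [this, E1]
      field_simp
      ring
    have hSgt : S - w i0 - x i1 * w i1 > 0 := by
      rw [hx00] at hS3; nlinarith
    have : lam * w i0 < lam * (δ * (x i1 * w i1)) := by nlinarith
    exact lt_of_mul_lt_mul_left this (le_of_lt hlam)
  -- use approximation constraints at column i2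
  have hw'2 : w' i2 = w i2 := hagree i2 (by simp [hi2])
  have hw2pos := hwpos i2
  have hw1pos := hwpos i1
  have hw0pos := hwpos i0
  -- w'0 ≤ w0
  have hle0 : w' i0 ≤ w i0 := by
    have hap := happrox i0 i2
    rw [hA0 i2 (by simp [hi2]), hw'2] at hap
    have hgt : x i2 < w i0 / w i2 := by
      rw [lt_div_iff₀ hw2pos]; nlinarith
    have habs : |x i2 - w i0 / w i2| = w i0 / w i2 - x i2 := by
      rw [abs_of_nonpos (by linarith)]; ring
    rw [habs] at hap
    have := (abs_le.mp hap).1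
    have hdivle : w' i0 / w i2 ≤ w i0 / w i2 := by linarith
    exact (div_le_div_iff_of_pos_right hw2pos).mp hdivle
  -- w1 ≤ w'1
  have hle1 : w i1 ≤ w' i1 := by
    have hap := happrox i1 i2
    rw [hA1 i2 (by simp [hi2]), hw'2] at hap
    have hlt : w i1 / w i2 < x i2 / x i1 := by
      rw [div_lt_div_iff₀ hw2pos (hx i1)]; nlinarith
    have habs : |x i2 / x i1 - w i1 / w i2| = x i2 / x i1 - w i1 / w i2 := by
      rw [abs_of_nonneg (by linarith)]
    rw [habs] at hap
    have := (abs_le.mp hap).2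
    have hdivle : w i1 / w i2 ≤ w' i1 / w i2 := by linarith
    exact (div_le_div_iff_of_pos_right hw2pos).mp hdivle
  refine ⟨hle0, hle1, ?_⟩
  intro hne
  have hw'0pos := hw'pos i0
  have hw'1pos := hw'pos i1
  -- w'0/w'1 < w0/w1
  have hstrict : w' i0 / w' i1 < w i0 / w i1 := by
    rw [div_lt_div_iff₀ hw'1pos hw1pos]
    rcases hne with h | h
    · have h0 : w' i0 < w i0 := lt_of_le_of_ne hle0 h
      nlinarith
    · have h1 : w i1 < w' i1 := lt_of_le_of_ne hle1 (Ne.symm h)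
      nlinarith
  have hlt12 : w i0 / w i1 < x i1 * δ := by
    rw [div_lt_iff₀ hw1pos]; nlinarith
  refine ⟨hstrict, ?_, ?_⟩
  · rw [hA01] at *; exact hlt12
  · have h1 : |x i1 * δ - w i0 / w i1| = x i1 * δ - w i0 / w i1 := by
      rw [abs_of_nonneg (by linarith)]
    have h2 : |x i1 * δ - w' i0 / w' i1| = x i1 * δ - w' i0 / w' i1 := by
      rw [abs_of_nonneg (by linarith)]
    calc |A i0 i1 - w i0 / w i1| = x i1 * δ - w i0 / w i1 := by rw [hA01, h1]
      _ < x i1 * δ - w' i0 / w' i1 := by linarith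
      _ = |A i0 i1 - w' i0 / w' i1| := by rw [hA01, h2]
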